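/- Let (S, A, p, t, r) be SMDP data and let f : ℝ^{S×A} → ℝ be Lipschitz continuous such that the pointwise scaling limit f_∞(q) := lim_{c→∞} f(cq)/c exists for every q. Suppose the only q ∈ ℝ^{S×A} satisfying q(s,a) = −t(s,a)·f_∞(q) + Σ_{s'} p(s,a,s')·max_{a'} q(s',a') for all (s,a) is q = 0. Then the solution set {q ∈ ℝ^{S×A} : q(s,a) = r(s,a) − t(s,a)·f(q) + Σ_{s'} p(s,a,s')·max_{a'} q(s',a') for all (s,a)} is bounded. -/
import Mathlib

open Filter Topology

theorem stmt4 (S A : Type*) [Fintype S] [Fintype A] [Nonempty S] [Nonempty A]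
    (p : S × A × S → ℝ) (t r : S × A → ℝ)
    (hp : ∀ s a s', 0 ≤ p (s, a, s'))
    (hp1 : ∀ s a, ∑ s' : S, p (s, a, s') = 1)
    (ht : ∀ s a, 0 < t (s, a))
    (f finf : (S × A → ℝ) → ℝ)
    (hLip : ∃ K : NNReal, LipschitzWith K f)
    -- the pointwise scaling limit `f_∞` exists
    (hlim : ∀ q : S × A → ℝ,
      Filter.Tendsto (fun c : ℝ => f (c • q) / c) Filter.atTop (nhds (finf q)))
    -- `q = 0` is the only solution of the `f_∞`-equation with zero rewards
    (huniq : ∀ q : S × A → ℝ,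
      (∀ s a, q (s, a) = - t (s, a) * finf q +
        ∑ s' : S, p (s, a, s') *
          (Finset.univ.sup' Finset.univ_nonempty fun a' : A => q (s', a'))) →
      q = 0) :
    Bornology.IsBounded {q : S × A → ℝ |
      ∀ s a, q (s, a) = r (s, a) - t (s, a) * f q +
        ∑ s' : S, p (s, a, s') *
          (Finset.univ.sup' Finset.univ_nonempty fun a' : A => q (s', a'))} := by
  by_contra hB
  rw [isBounded_iff_forall_norm_le] at hB
  push_neg at hB
  choose Q hQmem hQnorm using hB
  set q : ℕ → (S × A → ℝ) := fun n => Q n with hqdef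
  set c : ℕ → ℝ := fun n => ‖q n‖ with hcdef
  have hc : ∀ n : ℕ, (n : ℝ) < c n := fun n => hQnorm n
  have hcpos : ∀ n, 0 < c n := fun n => lt_of_le_of_lt (Nat.cast_nonneg n) (hc n)
  have hctop : Tendsto c atTop atTop :=
    tendsto_atTop_mono (fun n => (hc n).le) tendsto_natCast_atTop_atTop
  set u : ℕ → (S × A → ℝ) := fun n => (c n)⁻¹ • q n with hudef
  have hqu : ∀ n, q n = c n • u n := by
    intro n
    rw [hudef, smul_smul, mul_inv_cancel₀ (hcpos n).ne', one_smul]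
  have hunorm : ∀ n, ‖u n‖ = 1 := by
    intro n
    rw [hudef, norm_smul, norm_inv, Real.norm_eq_abs, abs_of_pos (hcpos n)]
    exact inv_mul_cancel₀ (hcpos n).ne'
  have husphere : ∀ n, u n ∈ Metric.sphere (0 : S × A → ℝ) 1 := fun n =>
    mem_sphere_zero_iff_norm.2 (hunorm n)
  obtain ⟨v, hv, φ, hφ, hconv⟩ :=
    (isCompact_sphere (0 : S × A → ℝ) 1).tendsto_subseq husphere
  have hdiff : Tendsto (fun n => ‖u (φ n) - v‖) atTop (𝓝 0) :=
    tendsto_iff_norm_sub_tendsto_zero.1 hconv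
  obtain ⟨K, hK⟩ := hLip
  -- the limit of f (q (φ n)) / c (φ n) is finf v
  have hf1 : Tendsto (fun n => f (c (φ n) • v) / c (φ n)) atTop (𝓝 (finf v)) :=
    (hlim v).comp (hctop.comp hφ.tendsto_atTop)
  have hf2 : Tendsto (fun n => f (q (φ n)) / c (φ n) - f (c (φ n) • v) / c (φ n))
      atTop (𝓝 0) := by
    apply squeeze_zero_norm (a := fun n => (K : ℝ) * ‖u (φ n) - v‖)
    · intro n
      have h1 : f (q (φ n)) / c (φ n) - f (c (φ n) • v) / c (φ n)
          = (f (q (φ n)) - f (c (φ n) • v)) / c (φ n) := by ring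
      rw [h1, norm_div, Real.norm_eq_abs (c (φ n)), abs_of_pos (hcpos (φ n))]
      rw [div_le_iff₀ (hcpos (φ n))]
      have h2 := hK.dist_le_mul (q (φ n)) (c (φ n) • v)
      rw [dist_eq_norm, dist_eq_norm] at h2
      calc ‖f (q (φ n)) - f (c (φ n) • v)‖ ≤ K * ‖q (φ n) - c (φ n) • v‖ := h2
        _ = K * ‖u (φ n) - v‖ * c (φ n) := by
            rw [hqu (φ n), ← smul_sub, norm_smul, Real.norm_eq_abs,
              abs_of_pos (hcpos (φ n))]
            ring
    · have : Tendsto (fun n : ℕ => (K : ℝ) * ‖u (φ n) - v‖) atTop (𝓝 ((K : ℝ) * 0)) :=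
        tendsto_const_nhds.mul hdiff
      simpa using this
  have hf : Tendsto (fun n => f (q (φ n)) / c (φ n)) atTop (𝓝 (finf v)) := by
    have := hf2.add hf1
    simpa using this
  -- rescaled fixed point equation
  have hueq : ∀ n s a, u n (s, a) = r (s, a) / c n - t (s, a) * (f (q n) / c n) +
      ∑ s' : S, p (s, a, s') *
        (Finset.univ.sup' Finset.univ_nonempty fun a' : A => u n (s', a')) := by
    intro n s a
    have h1 : ∀ s' : S,
        (c n)⁻¹ * (Finset.univ.sup' Finset.univ_nonempty fun a' : A => q n (s', a'))
        = Finset.univ.sup' Finset.univ_nonempty fun a' : A => u n (s', a') := by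
      intro s'
      rw [Finset.comp_sup'_eq_sup'_comp _ (fun x : ℝ => (c n)⁻¹ * x)]
      · rfl
      · intro x y
        exact mul_max_of_nonneg x y (inv_nonneg.2 (hcpos n).le)
    have h0 : u n (s, a) = (c n)⁻¹ * q n (s, a) := rfl
    have hmem : q n (s, a) = r (s, a) - t (s, a) * f (q n) +
        ∑ s' : S, p (s, a, s') *
          (Finset.univ.sup' Finset.univ_nonempty fun a' : A => q n (s', a')) :=
      hQmem (n : ℝ) s a
    rw [h0, hmem, mul_add, mul_sub, Finset.mul_sum]
    congr 1
    · congr 1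
      · exact inv_mul_eq_div _ _
      · rw [div_eq_inv_mul]; ring
    · refine Finset.sum_congr rfl fun s' _ => ?_
      rw [← h1 s']; ring
  -- pass to the limit in the equation
  have hveq : ∀ s a, v (s, a) = - t (s, a) * finf v +
      ∑ s' : S, p (s, a, s') *
        (Finset.univ.sup' Finset.univ_nonempty fun a' : A => v (s', a')) := by
    intro s a
    have hL : Tendsto (fun n => u (φ n) (s, a)) atTop (𝓝 (v (s, a))) :=
      tendsto_pi_nhds.1 hconv (s, a)
    have hr : Tendsto (fun n => r (s, a) / c (φ n)) atTop (𝓝 0) :=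
      tendsto_const_nhds.div_atTop (hctop.comp hφ.tendsto_atTop)
    have htf : Tendsto (fun n => t (s, a) * (f (q (φ n)) / c (φ n))) atTop
        (𝓝 (t (s, a) * finf v)) := tendsto_const_nhds.mul hf
    have hsum : Tendsto (fun n => ∑ s' : S, p (s, a, s') *
        (Finset.univ.sup' Finset.univ_nonempty fun a' : A => u (φ n) (s', a'))) atTop
        (𝓝 (∑ s' : S, p (s, a, s') *
          (Finset.univ.sup' Finset.univ_nonempty fun a' : A => v (s', a')))) := by
      refine tendsto_finset_sum _ fun s' _ => tendsto_const_nhds.mul ?_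
      exact Filter.Tendsto.finset_sup'_nhds_apply Finset.univ_nonempty
        fun a' _ => tendsto_pi_nhds.1 hconv (s', a')
    have hR := (hr.sub htf).add hsum
    have hfun : (fun n => u (φ n) (s, a)) = fun n =>
        r (s, a) / c (φ n) - t (s, a) * (f (q (φ n)) / c (φ n)) +
        ∑ s' : S, p (s, a, s') *
          (Finset.univ.sup' Finset.univ_nonempty fun a' : A => u (φ n) (s', a')) := by
      funext n; exact hueq (φ n) s a
    rw [hfun] at hL
    have := tendsto_nhds_unique hL hR
    rw [this]; ring
  have hv0 := huniq v hveq
  have : ‖v‖ = 1 := mem_sphere_zero_iff_norm.1 hv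
  rw [hv0] at this
  simp at this
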